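/- Let n, d be positive integers, let p ∈ ℝ^n be a probability vector (p_i ≥ 0 for all i and Σ_{i=1}^n p_i = 1), and let a_1, …, a_n and x_1, …, x_n be vectors in ℝ^d. Then (Σ_{i=1}^n p_i ⟨a_i, x_i⟩)² ≤ d · Σ_{i=1}^n Σ_{j=1}^n p_i p_j ⟨a_j, x_i⟩², where ⟨·,·⟩ is the Euclidean inner product on ℝ^d. -/

import Mathlib

open scoped BigOperators
open Finset

lemma aux_key {n d : ℕ} (u v : Fin d → Fin n → ℝ) :
    (∑ i, ∑ k, u k i * v k i) ^ 2 ≤ (d : ℝ) * ∑ i, ∑ j, (∑ k, u k i * v k j) ^ 2 := by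
  classical
  set E := EuclideanSpace ℝ (Fin n) with hE
  let u' : Fin d → E := fun k => (WithLp.toLp 2 (u k) : EuclideanSpace ℝ (Fin n))
  set W : Submodule ℝ E := Submodule.span ℝ (Set.range u') with hW
  have hmd : Module.finrank ℝ W ≤ d := by
    refine le_trans (finrank_span_le_card (Set.range u')) ?_
    rw [Set.toFinset_card]
    simpa using Fintype.card_range_le u'
  let b := stdOrthonormalBasis ℝ W
  let c : Fin (Module.finrank ℝ W) → Fin n → ℝ := fun s => ((b s : E) : Fin n → ℝ)
  have horth : ∀ s t, ∑ i, c s i * c t i = if s = t then (1:ℝ) else 0 := by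
    intro s t
    have h := orthonormal_iff_ite.mp b.orthonormal s t
    rw [Submodule.coe_inner] at h
    rw [PiLp.inner_apply] at h
    rw [← h]
    exact Finset.sum_congr rfl fun i _ => by
      simp only [c, RCLike.inner_apply, conj_trivial, mul_comm]
  let g : Fin d → Fin (Module.finrank ℝ W) → ℝ := fun k s => ∑ i, c s i * u k i
  have hexp : ∀ k i, u k i = ∑ s, g k s * c s i := by
    intro k i
    have hmem : u' k ∈ W := Submodule.subset_span ⟨k, rfl⟩
    have h := b.sum_repr ⟨u' k, hmem⟩
    have h3 : ∀ s, b.repr ⟨u' k, hmem⟩ s = g k s := by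
      intro s
      rw [b.repr_apply_apply, Submodule.coe_inner]
      have : (inner ℝ ((b s : E)) (u' k) : ℝ) = ∑ x, (b s : E) x * u' k x := by
        rw [PiLp.inner_apply]
        exact Finset.sum_congr rfl fun x _ => by simp [RCLike.inner_apply, mul_comm]
      rw [this]
    have h2 : ((∑ s, b.repr ⟨u' k, hmem⟩ s • b s : W) : E) = u' k := congrArg Subtype.val h
    rw [Submodule.coe_sum] at h2
    rw [Finset.sum_congr rfl (fun s _ => by
      rw [Submodule.coe_smul, h3 s] :
      ∀ s ∈ Finset.univ, ((b.repr ⟨u' k, hmem⟩ s • b s : W) : E) = g k s • (b s : E))] at h2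
    calc u k i = (∑ s, g k s • (b s : E)) i := (congrArg (fun v : E => v i) h2).symm
      _ = ∑ s, (g k s • (b s : E)) i := by rw [WithLp.ofLp_sum, Finset.sum_apply]
      _ = ∑ s, g k s * c s i := Finset.sum_congr rfl fun s _ => rfl
  let w : Fin n → Fin (Module.finrank ℝ W) → ℝ := fun j s => ∑ k, g k s * v k j
  have hM : ∀ i j, (∑ k, u k i * v k j) = ∑ s, c s i * w j s := by
    intro i j
    calc ∑ k, u k i * v k j = ∑ k, ∑ s, c s i * (g k s * v k j) := by
          refine Finset.sum_congr rfl fun k _ => ?_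
          rw [hexp k i, Finset.sum_mul]
          exact Finset.sum_congr rfl fun s _ => by ring
      _ = ∑ s, ∑ k, c s i * (g k s * v k j) := Finset.sum_comm
      _ = ∑ s, c s i * w j s := by
          refine Finset.sum_congr rfl fun s _ => ?_
          rw [Finset.mul_sum]
  have hF : ∀ j, ∑ i, (∑ k, u k i * v k j) ^ 2 = ∑ s, (w j s) ^ 2 := by
    intro j
    have h1 : ∀ i, (∑ k, u k i * v k j) ^ 2
        = ∑ s, ∑ t, (w j s * w j t) * (c s i * c t i) := by
      intro i
      rw [hM, sq, Finset.sum_mul_sum]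
      exact Finset.sum_congr rfl fun s _ => Finset.sum_congr rfl fun t _ => by ring
    simp_rw [h1]
    rw [Finset.sum_comm]
    calc ∑ s, ∑ i, ∑ t, (w j s * w j t) * (c s i * c t i)
        = ∑ s, ∑ t, (w j s * w j t) * ∑ i, c s i * c t i := by
          refine Finset.sum_congr rfl fun s _ => ?_
          rw [Finset.sum_comm]
          exact Finset.sum_congr rfl fun t _ => (Finset.mul_sum _ _ _).symm
      _ = ∑ s, (w j s) ^ 2 := by
          refine Finset.sum_congr rfl fun s _ => ?_
          simp_rw [horth]
          simp [sq]
  have hT : ∑ i, ∑ k, u k i * v k i = ∑ s, ∑ i, c s i * w i s := by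
    simp_rw [hM]
    exact Finset.sum_comm
  rw [hT]
  have step1 : (∑ s, ∑ i, c s i * w i s) ^ 2
      ≤ (Module.finrank ℝ W : ℝ) * ∑ s, (∑ i, c s i * w i s) ^ 2 := by
    have := sq_sum_le_card_mul_sum_sq (s := (Finset.univ : Finset (Fin (Module.finrank ℝ W))))
      (f := fun s => ∑ i, c s i * w i s)
    simpa using this
  have step2 : ∑ s, (∑ i, c s i * w i s) ^ 2 ≤ ∑ s, ∑ i, (w i s) ^ 2 := by
    refine Finset.sum_le_sum fun s _ => ?_
    have hcs : (∑ i, c s i ^ 2) = 1 := by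
      have := horth s s
      simpa [sq] using this
    have := Finset.sum_mul_sq_le_sq_mul_sq Finset.univ (fun i => c s i) (fun i => w i s)
    rw [hcs, one_mul] at this
    exact this
  have hfin : ∑ s, ∑ i, (w i s) ^ 2 = ∑ i, ∑ j, (∑ k, u k i * v k j) ^ 2 := by
    rw [Finset.sum_comm]
    calc ∑ i, ∑ s, (w i s) ^ 2 = ∑ i, ∑ j, (∑ k, u k j * v k i) ^ 2 := by
          refine Finset.sum_congr rfl fun i _ => (hF i).symm ▸ ?_
          rw [← hF i]
      _ = ∑ i, ∑ j, (∑ k, u k i * v k j) ^ 2 := Finset.sum_comm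
  have hnn : (0:ℝ) ≤ ∑ i, ∑ j, (∑ k, u k i * v k j) ^ 2 := by positivity
  calc (∑ s, ∑ i, c s i * w i s) ^ 2
      ≤ (Module.finrank ℝ W : ℝ) * ∑ s, (∑ i, c s i * w i s) ^ 2 := step1
    _ ≤ (Module.finrank ℝ W : ℝ) * ∑ s, ∑ i, (w i s) ^ 2 := by
        refine mul_le_mul_of_nonneg_left step2 ?_; positivity
    _ = (Module.finrank ℝ W : ℝ) * ∑ i, ∑ j, (∑ k, u k i * v k j) ^ 2 := by rw [hfin]
    _ ≤ (d : ℝ) * ∑ i, ∑ j, (∑ k, u k i * v k j) ^ 2 := by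
        exact mul_le_mul_of_nonneg_right (by exact_mod_cast hmd) hnn

/-- For a probability vector `p` and vectors `a₁, …, aₙ`, `x₁, …, xₙ` in `ℝᵈ`,
`(∑ᵢ pᵢ ⟨aᵢ, xᵢ⟩)² ≤ d ∑ᵢ ∑ⱼ pᵢ pⱼ ⟨aⱼ, xᵢ⟩²`. -/
theorem sq_sum_inner_le_dim_mul_sum_sq_inner {n d : ℕ} (hn : 0 < n) (hd : 0 < d)
    (p : Fin n → ℝ) (hp0 : ∀ i, 0 ≤ p i) (hp1 : ∑ i, p i = 1)
    (a x : Fin n → Fin d → ℝ) :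
    (∑ i, p i * ∑ k, a i k * x i k) ^ 2 ≤
      (d : ℝ) * ∑ i, ∑ j, p i * p j * (∑ k, a j k * x i k) ^ 2 := by
  have key := aux_key (fun k i => Real.sqrt (p i) * x i k) (fun k j => Real.sqrt (p j) * a j k)
  have h1 : ∑ i, ∑ k, (Real.sqrt (p i) * x i k) * (Real.sqrt (p i) * a i k)
      = ∑ i, p i * ∑ k, a i k * x i k := by
    refine Finset.sum_congr rfl fun i _ => ?_
    rw [Finset.mul_sum]
    refine Finset.sum_congr rfl fun k _ => ?_
    have : Real.sqrt (p i) * Real.sqrt (p i) = p i := Real.mul_self_sqrt (hp0 i)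
    calc (Real.sqrt (p i) * x i k) * (Real.sqrt (p i) * a i k)
        = (Real.sqrt (p i) * Real.sqrt (p i)) * (a i k * x i k) := by ring
      _ = p i * (a i k * x i k) := by rw [this]
  have h2 : ∀ i j, (∑ k, (Real.sqrt (p i) * x i k) * (Real.sqrt (p j) * a j k)) ^ 2
      = p i * p j * (∑ k, a j k * x i k) ^ 2 := by
    intro i j
    have hs : ∑ k, (Real.sqrt (p i) * x i k) * (Real.sqrt (p j) * a j k)
        = (Real.sqrt (p i) * Real.sqrt (p j)) * ∑ k, a j k * x i k := by
      rw [Finset.mul_sum]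
      exact Finset.sum_congr rfl fun k _ => by ring
    rw [hs, mul_pow, mul_pow, Real.sq_sqrt (hp0 i), Real.sq_sqrt (hp0 j)]
  rw [h1] at key
  simp_rw [h2] at key
  exact key
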